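/- Let L be a group and let μ : M → L and ν : N → L be crossed modules of groups over L, with induced mutual actions ᵐn := ^(μ(m))n and ⁿm := ^(ν(n))m. Then there is a unique action of L on the non-abelian tensor product M ⊗ N by automorphisms such that ˡ(m ⊗ n) = (ˡm) ⊗ (ˡn) for all l ∈ L, m ∈ M, n ∈ N. -/
import Mathlib

/-- A crossed module of groups: a homomorphism `μ : M → L` together with an action of `L`
on `M` by automorphisms, such that `μ` is equivariant (with `L` acting on itself by
conjugation) and the Peiffer identity holds. -/
def IsCrossedModule {M L : Type*} [Group M] [Group L]
    (μ : M →* L) (σ : L →* MulAut M) : Prop :=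
  (∀ l m, μ (σ l m) = l * μ m * l⁻¹) ∧ ∀ m m', σ (μ m) m' = m * m' * m⁻¹

/-- The defining relations of the Brown–Loday non-abelian tensor product of two groups `M`
and `N` acting on each other via `actM : M → N → N` and `actN : N → M → M` (and on
themselves by conjugation): `(m * m') ⊗ n = (ᵐm' ⊗ ᵐn) * (m ⊗ n)` and
`m ⊗ (n * n') = (m ⊗ n) * (ⁿm ⊗ ⁿn')`. -/
def tensorRels (M N : Type*) [Group M] [Group N]
    (actM : M → N → N) (actN : N → M → M) : Set (FreeGroup (M × N)) :=
  (Set.range fun p : M × M × N =>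
    FreeGroup.of (p.1 * p.2.1, p.2.2) *
      (FreeGroup.of (p.1 * p.2.1 * p.1⁻¹, actM p.1 p.2.2) * FreeGroup.of (p.1, p.2.2))⁻¹) ∪
  (Set.range fun p : M × N × N =>
    FreeGroup.of (p.1, p.2.1 * p.2.2) *
      (FreeGroup.of (p.1, p.2.1) *
        FreeGroup.of (actN p.2.1 p.1, p.2.1 * p.2.2 * p.2.1⁻¹))⁻¹)

/-- The Brown–Loday non-abelian tensor product `M ⊗ N` of groups `M` and `N` acting on
each other, presented by generators `m ⊗ n` and the tensor relations. -/
abbrev NATensor (M N : Type*) [Group M] [Group N]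
    (actM : M → N → N) (actN : N → M → M) : Type _ :=
  PresentedGroup (tensorRels M N actM actN)

/-- The generator `m ⊗ n` of the non-abelian tensor product. -/
abbrev tensorOf {M N : Type*} [Group M] [Group N]
    {actM : M → N → N} {actN : N → M → M} (m : M) (n : N) :
    NATensor M N actM actN :=
  PresentedGroup.of (m, n)

section Aux

variable {M N : Type*} [Group M] [Group N] {actM : M → N → N} {actN : N → M → M}

lemma natensor_rel1 (m m' : M) (n : N) :
    (tensorOf (actM := actM) (actN := actN) (m * m') n) =
      tensorOf (m * m' * m⁻¹) (actM m n) * tensorOf m n := by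
  have h : (PresentedGroup.mk (tensorRels M N actM actN)
      (FreeGroup.of (m * m', n) *
        (FreeGroup.of (m * m' * m⁻¹, actM m n) * FreeGroup.of (m, n))⁻¹)) = 1 :=
    (QuotientGroup.eq_one_iff _).2 <|
      Subgroup.subset_normalClosure (Or.inl ⟨(m, m', n), rfl⟩)
  rw [map_mul, map_inv, map_mul, mul_inv_eq_one] at h
  exact h

lemma natensor_rel2 (m : M) (n n' : N) :
    (tensorOf (actM := actM) (actN := actN) m (n * n')) =
      tensorOf m n * tensorOf (actN n m) (n * n' * n⁻¹) := by
  have h : (PresentedGroup.mk (tensorRels M N actM actN)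
      (FreeGroup.of (m, n * n') *
        (FreeGroup.of (m, n) * FreeGroup.of (actN n m, n * n' * n⁻¹))⁻¹)) = 1 :=
    (QuotientGroup.eq_one_iff _).2 <|
      Subgroup.subset_normalClosure (Or.inr ⟨(m, n, n'), rfl⟩)
  rw [map_mul, map_inv, map_mul, mul_inv_eq_one] at h
  exact h

end Aux

/-- Given crossed modules `μ : M → L` and `ν : N → L`, there is a unique action of `L` by
automorphisms on the non-abelian tensor product `M ⊗ N` with `ˡ(m ⊗ n) = (ˡm) ⊗ (ˡn)`. -/
theorem tensor_action_exists_unique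
    {M N L : Type*} [Group M] [Group N] [Group L]
    (μ : M →* L) (ν : N →* L) (σM : L →* MulAut M) (σN : L →* MulAut N)
    (hμ : IsCrossedModule μ σM) (hν : IsCrossedModule ν σN) :
    ∃! φ : L →* MulAut (NATensor M N (fun m n => σN (μ m) n) (fun n m => σM (ν n) m)),
      ∀ (l : L) (m : M) (n : N),
        φ l (tensorOf m n) = tensorOf (σM l m) (σN l n) := by
  classical
  set aM : M → N → N := fun m n => σN (μ m) n with haM
  set aN : N → M → M := fun n m => σM (ν n) m with haN
  -- compatibility of the actions with σ
  have hcompM : ∀ (l : L) (m : M) (n : N), σN l (aM m n) = aM (σM l m) (σN l n) := by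
    intro l m n
    simp only [haM, hμ.1, map_mul, map_inv, MulAut.mul_apply]
    simp
  have hcompN : ∀ (l : L) (n : N) (m : M), σM l (aN n m) = aN (σN l n) (σM l m) := by
    intro l n m
    simp only [haN, hν.1, map_mul, map_inv, MulAut.mul_apply]
    simp
  -- the maps on generators kill the relations
  have key : ∀ l : L, ∀ r ∈ tensorRels M N aM aN,
      FreeGroup.lift (fun p : M × N =>
        (tensorOf (σM l p.1) (σN l p.2) : NATensor M N aM aN)) r = 1 := by
    intro l r hr
    rcases hr with ⟨⟨m, m', n⟩, rfl⟩ | ⟨⟨m, n, n'⟩, rfl⟩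
    · simp only [map_mul, map_inv, FreeGroup.lift_apply_of, mul_inv_eq_one]
      rw [hcompM]
      exact natensor_rel1 _ _ _
    · simp only [map_mul, map_inv, FreeGroup.lift_apply_of, mul_inv_eq_one]
      rw [hcompN]
      exact natensor_rel2 _ _ _
  -- the homomorphism induced by each l
  let g : L → (NATensor M N aM aN →* NATensor M N aM aN) := fun l =>
    PresentedGroup.toGroup (key l)
  have hg : ∀ (l : L) (m : M) (n : N),
      g l (tensorOf m n) = tensorOf (σM l m) (σN l n) := fun l m n =>
    PresentedGroup.toGroup.of (key l)
  have hgcomp : ∀ l l' : L, (g l).comp (g l') = g (l * l') := by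
    intro l l'
    apply PresentedGroup.ext
    rintro ⟨m, n⟩
    simp only [MonoidHom.comp_apply]
    show g l (g l' (tensorOf m n)) = g (l * l') (tensorOf m n)
    rw [hg, hg, hg, map_mul, map_mul, MulAut.mul_apply, MulAut.mul_apply]
  have hgone : g 1 = MonoidHom.id _ := by
    apply PresentedGroup.ext
    rintro ⟨m, n⟩
    show g 1 (tensorOf m n) = tensorOf m n
    rw [hg, map_one, map_one]
    rfl
  -- assemble into automorphisms
  let e : L → MulAut (NATensor M N aM aN) := fun l =>
    { toFun := g l
      invFun := g l⁻¹
      left_inv := fun x => by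
        have := congrArg (fun f : NATensor M N aM aN →* NATensor M N aM aN => f x)
          ((hgcomp l⁻¹ l).trans (by rw [inv_mul_cancel, hgone]))
        simpa using this
      right_inv := fun x => by
        have := congrArg (fun f : NATensor M N aM aN →* NATensor M N aM aN => f x)
          ((hgcomp l l⁻¹).trans (by rw [mul_inv_cancel, hgone]))
        simpa using this
      map_mul' := map_mul (g l) }
  refine ⟨{ toFun := e
            map_one' := ?_
            map_mul' := ?_ }, ?_, ?_⟩
  · ext x
    exact congrArg (fun f : NATensor M N aM aN →* NATensor M N aM aN => f x) hgone
  · intro l l'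
    ext x
    exact congrArg (fun f : NATensor M N aM aN →* NATensor M N aM aN => f x)
      (hgcomp l l').symm
  · intro l m n
    exact hg l m n
  · intro ψ hψ
    ext l x
    show ψ l x = e l x
    have : (MulEquiv.toMonoidHom (ψ l) : NATensor M N aM aN →* NATensor M N aM aN) = g l := by
      apply PresentedGroup.ext
      rintro ⟨m, n⟩
      show ψ l (tensorOf m n) = g l (tensorOf m n)
      rw [hψ, hg]
    exact congrArg (fun f : NATensor M N aM aN →* NATensor M N aM aN => f x) this
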